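/- For a finite hidden Markov model, the backward sampling kernel is given by reweighting the filter distribution by the transition probability: for 1 ≤ t ≤ T−1, P(X_t = x | X_{t+1} = x*, Y_{1:t} = y_{1:t}) = w_t(x) · p(x* | x) / Σ_{x'∈S} w_t(x') · p(x* | x'), where w_t(x) := P(X_t = x | Y_{1:t} = y_{1:t}), provided the conditioning event {X_{t+1} = x*, Y_{1:t} = y_{1:t}} has positive probability. -/

import Mathlib

open Finset

namespace FiniteHMM

noncomputable section

/-- A trajectory of a hidden Markov model over `T` steps: hidden states at times
`0, 1, ..., T` and observations at times `1, ..., T` (observation at time `i+1` is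
component `i`). -/
abbrev Traj (S Y : Type) (T : ℕ) : Type := (Fin (T + 1) → S) × (Fin T → Y)

variable {S Y : Type} [Fintype S] [Fintype Y]

/-- Joint probability of a complete trajectory:
`ρ(x₀) ∏ₜ p(xₜ | xₜ₋₁) g(yₜ | xₜ)`, where `p x' x` is the probability of a transition
from `x'` to `x` and `g x y` is the probability of emitting `y` from state `x`. -/
def joint (T : ℕ) (rho : S → ℝ) (p : S → S → ℝ) (g : S → Y → ℝ)
    (ω : Traj S Y T) : ℝ :=
  rho (ω.1 0) *
    ∏ i : Fin T, p (ω.1 i.castSucc) (ω.1 i.succ) * g (ω.1 i.succ) (ω.2 i)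

open Classical in
/-- Probability of an event `A` of trajectories. -/
def Pr (T : ℕ) (rho : S → ℝ) (p : S → S → ℝ) (g : S → Y → ℝ)
    (A : Traj S Y T → Prop) : ℝ :=
  ∑ ω : Traj S Y T, if A ω then joint T rho p g ω else 0

/-- Conditional probability `P(A | B)`. -/
def cPr (T : ℕ) (rho : S → ℝ) (p : S → S → ℝ) (g : S → Y → ℝ)
    (A B : Traj S Y T → Prop) : ℝ :=
  Pr T rho p g (fun ω => A ω ∧ B ω) / Pr T rho p g B

/-! ### Auxiliary lemmas -/

lemma joint_nonneg {T : ℕ} {rho : S → ℝ} {p : S → S → ℝ} {g : S → Y → ℝ}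
    (hrho0 : ∀ x, 0 ≤ rho x) (hp0 : ∀ x' x, 0 ≤ p x' x) (hg0 : ∀ x y, 0 ≤ g x y)
    (ω : Traj S Y T) : 0 ≤ joint T rho p g ω :=
  mul_nonneg (hrho0 _) (Finset.prod_nonneg fun _ _ => mul_nonneg (hp0 _ _) (hg0 _ _))

lemma Pr_nonneg {T : ℕ} {rho : S → ℝ} {p : S → S → ℝ} {g : S → Y → ℝ}
    (hrho0 : ∀ x, 0 ≤ rho x) (hp0 : ∀ x' x, 0 ≤ p x' x) (hg0 : ∀ x y, 0 ≤ g x y)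
    (A : Traj S Y T → Prop) : 0 ≤ Pr T rho p g A :=
  Finset.sum_nonneg fun ω _ => by
    by_cases h : A ω
    · simp only [h, if_true]; exact joint_nonneg hrho0 hp0 hg0 ω
    · simp [h]

lemma Pr_congr {T : ℕ} {rho : S → ℝ} {p : S → S → ℝ} {g : S → Y → ℝ}
    {A A' : Traj S Y T → Prop} (h : ∀ ω, A ω ↔ A' ω) :
    Pr T rho p g A = Pr T rho p g A' := by
  have : A = A' := funext fun ω => propext (h ω)
  rw [this]

/-- Restriction of a trajectory of length `T+1` to a trajectory of length `T`. -/
def res {T : ℕ} (ω : Traj S Y (T + 1)) : Traj S Y T :=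
  (fun i => ω.1 i.castSucc, fun i => ω.2 i.castSucc)

lemma joint_snoc {T : ℕ} (rho : S → ℝ) (p : S → S → ℝ) (g : S → Y → ℝ)
    (f : Fin (T + 1) → S) (h : Fin T → Y) (s : S) (y : Y) :
    joint (T + 1) rho p g (Fin.snoc f s, Fin.snoc h y)
      = joint T rho p g (f, h) * (p (f (Fin.last T)) s * g s y) := by
  unfold joint
  rw [Fin.prod_univ_castSucc]
  simp only [Fin.succ_castSucc, Fin.snoc_castSucc, Fin.snoc_last, Fin.succ_last]
  have h0 : (Fin.snoc f s : Fin (T + 2) → S) 0 = f 0 := by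
    have : ((0 : Fin (T + 1)).castSucc : Fin (T + 2)) = 0 := rfl
    rw [← this, Fin.snoc_castSucc]
  rw [h0]
  ring

lemma res_snoc {T : ℕ} (ω : Traj S Y T) (s : S) (y : Y) :
    res (Fin.snoc ω.1 s, Fin.snoc ω.2 y) = ω := by
  refine Prod.ext ?_ ?_ <;> funext i <;> simp [res]

lemma sum_traj_succ {T : ℕ} (F : Traj S Y (T + 1) → ℝ) :
    ∑ ω : Traj S Y (T + 1), F ω
      = ∑ ω : Traj S Y T, ∑ s : S, ∑ y : Y, F (Fin.snoc ω.1 s, Fin.snoc ω.2 y) := by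
  classical
  let e : (Traj S Y T × (S × Y)) ≃ Traj S Y (T + 1) :=
    { toFun := fun q => (Fin.snoc q.1.1 q.2.1, Fin.snoc q.1.2 q.2.2)
      invFun := fun ω => ((Fin.init ω.1, Fin.init ω.2), (ω.1 (Fin.last _), ω.2 (Fin.last _)))
      left_inv := fun q => by simp [Fin.init_snoc]
      right_inv := fun ω => by simp [Fin.snoc_init_self] }
  rw [← Equiv.sum_comp e F]
  rw [Fintype.sum_prod_type]
  refine Finset.sum_congr rfl fun ω _ => ?_
  rw [Fintype.sum_prod_type]
  rfl

lemma Pr_res {T : ℕ} (rho : S → ℝ) (p : S → S → ℝ) (g : S → Y → ℝ)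
    (hp1 : ∀ x' : S, (∑ x : S, p x' x) = 1) (hg1 : ∀ x : S, (∑ y : Y, g x y) = 1)
    (A : Traj S Y T → Prop) :
    Pr (T + 1) rho p g (fun ω => A (res ω)) = Pr T rho p g A := by
  classical
  unfold Pr
  rw [sum_traj_succ]
  refine Finset.sum_congr rfl fun ω _ => ?_
  by_cases hA : A ω
  · simp only [res_snoc, hA, if_true, joint_snoc]
    have hy : ∀ s : S, ∑ y : Y, joint T rho p g ω * (p (ω.1 (Fin.last T)) s * g s y)
        = joint T rho p g ω * p (ω.1 (Fin.last T)) s := by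
      intro s
      simp only [← mul_assoc]
      rw [← Finset.mul_sum, hg1, mul_one]
    simp only [hy]
    rw [← Finset.mul_sum, hp1, mul_one]
  · simp only [res_snoc, hA, if_false]
    simp

lemma Pr_step {T : ℕ} (rho : S → ℝ) (p : S → S → ℝ) (g : S → Y → ℝ)
    (hg1 : ∀ x : S, (∑ y : Y, g x y) = 1)
    (A : Traj S Y T → Prop) (x xs : S) :
    Pr (T + 1) rho p g (fun ω => ω.1 (Fin.last (T + 1)) = xs ∧
        ω.1 ((Fin.last T).castSucc) = x ∧ A (res ω))
      = p x xs * Pr T rho p g (fun ω => ω.1 (Fin.last T) = x ∧ A ω) := by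
  classical
  unfold Pr
  rw [sum_traj_succ, Finset.mul_sum]
  refine Finset.sum_congr rfl fun ω _ => ?_
  simp only [res_snoc, Fin.snoc_last, Fin.snoc_castSucc, joint_snoc]
  by_cases hA : ω.1 (Fin.last T) = x ∧ A ω
  · obtain ⟨h1, h2⟩ := hA
    simp only [h1, h2, and_true, if_true]
    have hy : ∀ s : S, ∑ y : Y, (if s = xs then joint T rho p g ω * (p x s * g s y) else 0)
        = if s = xs then joint T rho p g ω * p x s else 0 := by
      intro s
      by_cases hs : s = xs
      · simp only [hs, if_true]
        simp only [← mul_assoc]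
        rw [← Finset.mul_sum, hg1, mul_one]
      · simp [hs]
    simp only [hy]
    rw [Finset.sum_ite_eq' Finset.univ xs (fun s => joint T rho p g ω * p x s)]
    simp only [Finset.mem_univ, if_true]
    ring
  · have : ∀ s : S, ∀ y : Y,
        (if s = xs ∧ ω.1 (Fin.last T) = x ∧ A ω then joint T rho p g ω * (p (ω.1 (Fin.last T)) s * g s y) else 0) = 0 := by
      intro s y
      rw [if_neg]
      rintro ⟨-, hc⟩
      exact hA hc
    simp only [this, Finset.sum_const_zero]
    rw [if_neg hA, mul_zero]

lemma Pr_partition {T : ℕ} (rho : S → ℝ) (p : S → S → ℝ) (g : S → Y → ℝ)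
    (j : Fin (T + 1)) (A : Traj S Y T → Prop) :
    Pr T rho p g A = ∑ x : S, Pr T rho p g (fun ω => ω.1 j = x ∧ A ω) := by
  classical
  unfold Pr
  rw [Finset.sum_comm]
  refine Finset.sum_congr rfl fun ω _ => ?_
  by_cases hA : A ω
  · simp only [hA, and_true, if_true]
    rw [Finset.sum_ite_eq Finset.univ (ω.1 j) (fun _ => joint T rho p g ω)]
    simp
  · simp [hA]

/-- Restriction of a trajectory to an initial segment. -/
def resLE {M T : ℕ} (h : M ≤ T) (ω : Traj S Y T) : Traj S Y M :=
  (fun i => ω.1 (Fin.castLE (by omega) i), fun i => ω.2 (Fin.castLE h i))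

lemma resLE_res {M d : ℕ} (ω : Traj S Y (M + d + 1)) :
    resLE (Nat.le_add_right M (d + 1)) ω = resLE (Nat.le_add_right M d) (res ω) := by
  refine Prod.ext ?_ ?_ <;> funext i
  · show ω.1 _ = ω.1 _
    congr 1
  · show ω.2 _ = ω.2 _
    congr 1

lemma Pr_resLE (rho : S → ℝ) (p : S → S → ℝ) (g : S → Y → ℝ)
    (hp1 : ∀ x' : S, (∑ x : S, p x' x) = 1) (hg1 : ∀ x : S, (∑ y : Y, g x y) = 1)
    (M d : ℕ) (A : Traj S Y M → Prop) :
    Pr (M + d) rho p g (fun ω => A (resLE (Nat.le_add_right M d) ω)) = Pr M rho p g A := by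
  induction d with
  | zero =>
    refine Pr_congr fun ω => ?_
    have : resLE (Nat.le_add_right M 0) ω = ω := by
      refine Prod.ext ?_ ?_ <;> funext i
      · show ω.1 _ = ω.1 _
        congr 1
      · show ω.2 _ = ω.2 _
        congr 1
    rw [this]
  | succ d ih =>
    have h1 : Pr (M + (d + 1)) rho p g (fun ω => A (resLE (Nat.le_add_right M (d + 1)) ω))
        = Pr (M + d + 1) rho p g (fun ω => (fun ω' => A (resLE (Nat.le_add_right M d) ω')) (res ω)) :=
      Pr_congr fun ω => by rw [resLE_res]
    exact h1.trans ((Pr_res rho p g hp1 hg1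
      (fun ω' => A (resLE (Nat.le_add_right M d) ω'))).trans ih)

/-- The HMM backward sampling kernel reweights the filter distribution by the transition
probability:
`P(Xₜ = x | X_{t+1} = x*, Y_{1:t} = y_{1:t})
  = wₜ(x) p(x* | x) / ∑_{x'} wₜ(x') p(x* | x')`,
where `wₜ(x) = P(Xₜ = x | Y_{1:t} = y_{1:t})`.  Here `p x x*` is the probability of a
transition from `x` to `x*`, and `yobs i` denotes `y_{i+1}`. -/
theorem backward_sampling_kernel
    (T : ℕ) (rho : S → ℝ) (p : S → S → ℝ) (g : S → Y → ℝ)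
    (hrho0 : ∀ x, 0 ≤ rho x) (hrho1 : (∑ x : S, rho x) = 1)
    (hp0 : ∀ x' x, 0 ≤ p x' x) (hp1 : ∀ x' : S, (∑ x : S, p x' x) = 1)
    (hg0 : ∀ x y, 0 ≤ g x y) (hg1 : ∀ x : S, (∑ y : Y, g x y) = 1)
    (yobs : Fin T → Y) (t : ℕ) (ht1 : 1 ≤ t) (ht2 : t ≤ T - 1)
    (x : S) (xstar : S)
    (hpos : 0 < Pr T rho p g (fun ω =>
      ω.1 ⟨t + 1, by omega⟩ = xstar ∧
        ∀ i : Fin T, (i : ℕ) < t → ω.2 i = yobs i)) :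
    cPr T rho p g (fun ω => ω.1 ⟨t, by omega⟩ = x)
        (fun ω => ω.1 ⟨t + 1, by omega⟩ = xstar ∧
          ∀ i : Fin T, (i : ℕ) < t → ω.2 i = yobs i) =
      cPr T rho p g (fun ω => ω.1 ⟨t, by omega⟩ = x)
          (fun ω => ∀ i : Fin T, (i : ℕ) < t → ω.2 i = yobs i) * p x xstar /
        ∑ x' : S,
          cPr T rho p g (fun ω => ω.1 ⟨t, by omega⟩ = x')
            (fun ω => ∀ i : Fin T, (i : ℕ) < t → ω.2 i = yobs i) * p x' xstar := by
  classical
  have hT : t + 1 ≤ T := by omega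
  obtain ⟨d, rfl⟩ : ∃ d, T = t + 1 + d := ⟨T - (t + 1), by omega⟩
  set B0 : Traj S Y t → Prop :=
    fun ω => ∀ i : Fin t, ω.2 i = yobs (Fin.castLE (by omega) i) with hB0
  set F : S → ℝ :=
    fun x' => Pr t rho p g (fun ω => ω.1 (Fin.last t) = x' ∧ B0 ω) with hF
  have obs_iff : ∀ (ω : Traj S Y (t + 1 + d)),
      ((∀ i : Fin (t + 1 + d), (i : ℕ) < t → ω.2 i = yobs i) ↔
        (∀ i : Fin t, ω.2 (Fin.castLE (by omega) i) = yobs (Fin.castLE (by omega) i))) := by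
    intro ω
    constructor
    · intro h i
      exact h _ (by simpa using i.2)
    · intro h i hi
      have h0 := h ⟨(i : ℕ), hi⟩
      have e : (Fin.castLE (by omega) (⟨(i : ℕ), hi⟩ : Fin t) : Fin (t + 1 + d)) = i :=
        Fin.ext rfl
      exact ((congrArg ω.2 e).symm.trans h0).trans (congrArg yobs e)
  -- key computations
  have hFB : ∀ x' : S,
      Pr (t + 1 + d) rho p g (fun ω => ω.1 ⟨t, by omega⟩ = x' ∧
        ∀ i : Fin (t + 1 + d), (i : ℕ) < t → ω.2 i = yobs i)
      = F x' := by
    intro x'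
    have h1 : Pr (t + 1 + d) rho p g (fun ω => ω.1 ⟨t, by omega⟩ = x' ∧
        ∀ i : Fin (t + 1 + d), (i : ℕ) < t → ω.2 i = yobs i)
        = Pr (t + 1 + d) rho p g (fun ω =>
          (fun ω0 : Traj S Y (t + 1) => ω0.1 ((Fin.last t).castSucc) = x' ∧ B0 (res ω0))
            (resLE (Nat.le_add_right (t + 1) d) ω)) := by
      refine Pr_congr fun ω => ?_
      beta_reduce
      have e2 : (resLE (Nat.le_add_right (t + 1) d) ω).1 ((Fin.last t).castSucc)
          = ω.1 ⟨t, by omega⟩ := by congr 1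
      have hobs := obs_iff ω
      constructor
      · rintro ⟨ha, hc⟩
        exact ⟨e2.trans ha, hobs.mp hc⟩
      · rintro ⟨ha, hc⟩
        exact ⟨e2.symm.trans ha, hobs.mpr hc⟩
    have h2 : Pr (t + 1 + d) rho p g (fun ω =>
          (fun ω0 : Traj S Y (t + 1) => ω0.1 ((Fin.last t).castSucc) = x' ∧ B0 (res ω0))
            (resLE (Nat.le_add_right (t + 1) d) ω))
        = Pr (t + 1) rho p g
            (fun ω0 : Traj S Y (t + 1) => ω0.1 ((Fin.last t).castSucc) = x' ∧ B0 (res ω0)) :=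
      Pr_resLE rho p g hp1 hg1 (t + 1) d
        (fun ω0 : Traj S Y (t + 1) => ω0.1 ((Fin.last t).castSucc) = x' ∧ B0 (res ω0))
    have h3 : Pr (t + 1) rho p g
          (fun ω0 : Traj S Y (t + 1) => ω0.1 ((Fin.last t).castSucc) = x' ∧ B0 (res ω0))
        = Pr t rho p g (fun ωt => ωt.1 (Fin.last t) = x' ∧ B0 ωt) :=
      Pr_res rho p g hp1 hg1 (fun ωt : Traj S Y t => ωt.1 (Fin.last t) = x' ∧ B0 ωt)
    exact h1.trans (h2.trans h3)
  have hW : Pr (t + 1 + d) rho p g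
      (fun ω => ∀ i : Fin (t + 1 + d), (i : ℕ) < t → ω.2 i = yobs i)
      = ∑ x' : S, F x' := by
    have h1 : Pr (t + 1 + d) rho p g
        (fun ω => ∀ i : Fin (t + 1 + d), (i : ℕ) < t → ω.2 i = yobs i)
        = Pr (t + 1 + d) rho p g (fun ω =>
          (fun ω0 : Traj S Y (t + 1) => B0 (res ω0)) (resLE (Nat.le_add_right (t + 1) d) ω)) := by
      refine Pr_congr fun ω => ?_
      beta_reduce
      have hobs := obs_iff ω
      exact ⟨fun hc => hobs.mp hc, fun hc => hobs.mpr hc⟩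
    have h2 : Pr (t + 1 + d) rho p g (fun ω =>
          (fun ω0 : Traj S Y (t + 1) => B0 (res ω0)) (resLE (Nat.le_add_right (t + 1) d) ω))
        = Pr (t + 1) rho p g (fun ω0 : Traj S Y (t + 1) => B0 (res ω0)) :=
      Pr_resLE rho p g hp1 hg1 (t + 1) d (fun ω0 : Traj S Y (t + 1) => B0 (res ω0))
    have h3 : Pr (t + 1) rho p g (fun ω0 : Traj S Y (t + 1) => B0 (res ω0))
        = Pr t rho p g B0 := Pr_res rho p g hp1 hg1 B0
    rw [h1, h2, h3, Pr_partition rho p g (Fin.last t) B0]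
  have hnum : Pr (t + 1 + d) rho p g (fun ω => ω.1 ⟨t, by omega⟩ = x ∧
      (ω.1 ⟨t + 1, by omega⟩ = xstar ∧
        ∀ i : Fin (t + 1 + d), (i : ℕ) < t → ω.2 i = yobs i))
      = p x xstar * F x := by
    have h1 : Pr (t + 1 + d) rho p g (fun ω => ω.1 ⟨t, by omega⟩ = x ∧
        (ω.1 ⟨t + 1, by omega⟩ = xstar ∧
          ∀ i : Fin (t + 1 + d), (i : ℕ) < t → ω.2 i = yobs i))
        = Pr (t + 1 + d) rho p g (fun ω =>
          (fun ω0 : Traj S Y (t + 1) => ω0.1 (Fin.last (t + 1)) = xstar ∧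
            ω0.1 ((Fin.last t).castSucc) = x ∧ B0 (res ω0))
            (resLE (Nat.le_add_right (t + 1) d) ω)) := by
      refine Pr_congr fun ω => ?_
      beta_reduce
      have e1 : (resLE (Nat.le_add_right (t + 1) d) ω).1 (Fin.last (t + 1))
          = ω.1 ⟨t + 1, by omega⟩ := by congr 1
      have e2 : (resLE (Nat.le_add_right (t + 1) d) ω).1 ((Fin.last t).castSucc)
          = ω.1 ⟨t, by omega⟩ := by congr 1
      have hobs := obs_iff ω
      constructor
      · rintro ⟨ha, hb, hc⟩
        exact ⟨e1.trans hb, e2.trans ha, hobs.mp hc⟩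
      · rintro ⟨hb, ha, hc⟩
        exact ⟨e2.symm.trans ha, e1.symm.trans hb, hobs.mpr hc⟩
    have h2 : Pr (t + 1 + d) rho p g (fun ω =>
          (fun ω0 : Traj S Y (t + 1) => ω0.1 (Fin.last (t + 1)) = xstar ∧
            ω0.1 ((Fin.last t).castSucc) = x ∧ B0 (res ω0))
            (resLE (Nat.le_add_right (t + 1) d) ω))
        = Pr (t + 1) rho p g (fun ω0 : Traj S Y (t + 1) =>
            ω0.1 (Fin.last (t + 1)) = xstar ∧
              ω0.1 ((Fin.last t).castSucc) = x ∧ B0 (res ω0)) :=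
      Pr_resLE rho p g hp1 hg1 (t + 1) d
        (fun ω0 : Traj S Y (t + 1) => ω0.1 (Fin.last (t + 1)) = xstar ∧
          ω0.1 ((Fin.last t).castSucc) = x ∧ B0 (res ω0))
    rw [h1, h2, Pr_step rho p g hg1 B0 x xstar]
  have hden : Pr (t + 1 + d) rho p g (fun ω =>
      ω.1 ⟨t + 1, by omega⟩ = xstar ∧
        ∀ i : Fin (t + 1 + d), (i : ℕ) < t → ω.2 i = yobs i)
      = ∑ x' : S, p x' xstar * F x' := by
    have h1 : Pr (t + 1 + d) rho p g (fun ω =>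
        ω.1 ⟨t + 1, by omega⟩ = xstar ∧
          ∀ i : Fin (t + 1 + d), (i : ℕ) < t → ω.2 i = yobs i)
        = Pr (t + 1 + d) rho p g (fun ω =>
          (fun ω0 : Traj S Y (t + 1) => ω0.1 (Fin.last (t + 1)) = xstar ∧ B0 (res ω0))
            (resLE (Nat.le_add_right (t + 1) d) ω)) := by
      refine Pr_congr fun ω => ?_
      beta_reduce
      have e1 : (resLE (Nat.le_add_right (t + 1) d) ω).1 (Fin.last (t + 1))
          = ω.1 ⟨t + 1, by omega⟩ := by congr 1
      have hobs := obs_iff ω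
      constructor
      · rintro ⟨hb, hc⟩
        exact ⟨e1.trans hb, hobs.mp hc⟩
      · rintro ⟨hb, hc⟩
        exact ⟨e1.symm.trans hb, hobs.mpr hc⟩
    have h2 : Pr (t + 1 + d) rho p g (fun ω =>
          (fun ω0 : Traj S Y (t + 1) => ω0.1 (Fin.last (t + 1)) = xstar ∧ B0 (res ω0))
            (resLE (Nat.le_add_right (t + 1) d) ω))
        = Pr (t + 1) rho p g (fun ω0 : Traj S Y (t + 1) =>
            ω0.1 (Fin.last (t + 1)) = xstar ∧ B0 (res ω0)) :=
      Pr_resLE rho p g hp1 hg1 (t + 1) d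
        (fun ω0 : Traj S Y (t + 1) => ω0.1 (Fin.last (t + 1)) = xstar ∧ B0 (res ω0))
    rw [h1, h2, Pr_partition rho p g ((Fin.last t).castSucc)]
    refine Finset.sum_congr rfl fun x' _ => ?_
    have h3 : Pr (t + 1) rho p g (fun ω0 => ω0.1 ((Fin.last t).castSucc) = x' ∧
        (ω0.1 (Fin.last (t + 1)) = xstar ∧ B0 (res ω0)))
        = Pr (t + 1) rho p g (fun ω0 => ω0.1 (Fin.last (t + 1)) = xstar ∧
          ω0.1 ((Fin.last t).castSucc) = x' ∧ B0 (res ω0)) :=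
      Pr_congr fun ω0 => by tauto
    rw [h3, Pr_step rho p g hg1 B0 x' xstar]
  -- positivity
  have hF0 : ∀ x' : S, 0 ≤ F x' := fun x' => Pr_nonneg hrho0 hp0 hg0 _
  have hD : 0 < ∑ x' : S, p x' xstar * F x' := by rwa [hden] at hpos
  have hWpos : 0 < ∑ x' : S, F x' := by
    refine lt_of_lt_of_le hD (Finset.sum_le_sum fun x' _ => ?_)
    have hle : p x' xstar ≤ 1 := by
      rw [← hp1 x']
      exact Finset.single_le_sum (fun y _ => hp0 x' y) (Finset.mem_univ xstar)
    calc p x' xstar * F x' ≤ 1 * F x' := mul_le_mul_of_nonneg_right hle (hF0 x')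
    _ = F x' := one_mul _
  -- final algebra
  unfold cPr
  rw [hnum, hden, hW, hFB x]
  have hsum : (∑ x' : S,
      Pr (t + 1 + d) rho p g (fun ω => ω.1 ⟨t, by omega⟩ = x' ∧
        ∀ i : Fin (t + 1 + d), (i : ℕ) < t → ω.2 i = yobs i) /
        (∑ x'' : S, F x'') * p x' xstar)
      = (∑ x' : S, p x' xstar * F x') / (∑ x'' : S, F x'') := by
    rw [Finset.sum_div]
    refine Finset.sum_congr rfl fun x' _ => ?_
    rw [hFB x']
    ring
  rw [hsum]
  field_simp

end
end FiniteHMM
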